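/- Let g(x) = 1/(x−i) and write Re g(x) = x/(x²+1), Im g(x) = 1/(x²+1) (up to sign conventions: Im(1/(x−i)) = 1/(x²+1)). Then (1/(8π²)) ∫∫_{ℝ²} ((Im g(−x²) − Im g(−y²))/(x−y))² dx dy = 3/32 and (1/(8π²)) ∫∫_{ℝ²} ((Re g(−x²) − Re g(−y²))/(x−y))² dx dy = 1/32; the same values hold with arguments x², y² in place of −x², −y². -/

import Mathlib

open MeasureTheory

/-- `Im g` for `g(x) = 1/(x−i)`, i.e. `x ↦ 1/(x²+1)`. -/
noncomputable def imG (u : ℝ) : ℝ := 1 / (u ^ 2 + 1)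

/-- `Re g` for `g(x) = 1/(x−i)`, i.e. `x ↦ x/(x²+1)`. -/
noncomputable def reG (u : ℝ) : ℝ := u / (u ^ 2 + 1)

open Real Filter Polynomial


lemma pow_le_aux {t : ℝ} (ht : 0 ≤ t) {k : ℕ} (hk : k ≤ 6) : t ^ k ≤ 1 + t ^ 6 := by
  rcases le_total t 1 with h | h
  · calc t ^ k ≤ 1 := pow_le_one₀ ht h
    _ ≤ 1 + t ^ 6 := by nlinarith [pow_nonneg ht 6]
  · calc t ^ k ≤ t ^ 6 := pow_le_pow_right₀ h hk
    _ ≤ 1 + t ^ 6 := by linarith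

lemma cont_hk (k : ℕ) : Continuous fun x : ℝ => x ^ k / (x ^ 4 + 1) ^ 2 := by
  apply Continuous.div (by continuity) (by continuity) (fun x => by positivity)

lemma int2 {k : ℕ} (hk : k ≤ 6) : Integrable fun x : ℝ => x ^ k / (x ^ 4 + 1) ^ 2 := by
  apply (integrable_inv_one_add_sq.const_mul 2).mono' (cont_hk k).aestronglyMeasurable
  filter_upwards with x
  have h1 : 0 < x ^ 4 + 1 := by positivity
  have h2 : 0 < 1 + x ^ 2 := by positivity
  rw [norm_div, norm_pow, Real.norm_eq_abs, Real.norm_eq_abs,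
    abs_of_pos (pow_pos h1 2), ← div_eq_mul_inv, div_le_div_iff₀ (by positivity) h2]
  have h3 := pow_le_aux (abs_nonneg x) hk
  have h4 : |x| ^ 2 = x ^ 2 := sq_abs x
  have h6 : |x| ^ 6 = x ^ 4 * x ^ 2 := by
    rw [show (6:ℕ) = 2*3 by rfl, pow_mul, sq_abs, ← pow_mul]; ring
  have h7 := mul_le_mul_of_nonneg_right h3 h2.le
  rw [h6] at h7
  nlinarith [sq_nonneg (x ^ 2 - 1), sq_nonneg (x ^ 3 - x), sq_nonneg (x ^ 4 - x ^ 2), sq_nonneg (x ^ 4 - 1)]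

lemma cont_gk (k : ℕ) : Continuous fun x : ℝ => x ^ k / (x ^ 4 + 1) := by
  apply Continuous.div (by continuity) (by continuity) (fun x => by positivity)

lemma int1 {k : ℕ} (hk : k ≤ 2) : Integrable fun x : ℝ => x ^ k / (x ^ 4 + 1) := by
  apply (integrable_inv_one_add_sq.const_mul 2).mono' (cont_gk k).aestronglyMeasurable
  filter_upwards with x
  have h1 : 0 < x ^ 4 + 1 := by positivity
  have h2 : 0 < 1 + x ^ 2 := by positivity
  rw [norm_div, norm_pow, Real.norm_eq_abs, Real.norm_eq_abs, abs_of_pos h1,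
    ← div_eq_mul_inv, div_le_div_iff₀ h1 h2]
  have h3 : |x| ^ k ≤ 1 + |x| ^ 2 := by
    rcases le_total |x| 1 with h | h
    · calc |x| ^ k ≤ 1 := pow_le_one₀ (abs_nonneg x) h
      _ ≤ 1 + |x| ^ 2 := by nlinarith [sq_nonneg x, sq_abs x]
    · calc |x| ^ k ≤ |x| ^ 2 := pow_le_pow_right₀ h hk
      _ ≤ 1 + |x| ^ 2 := by linarith
  have h4 : |x| ^ 2 = x ^ 2 := sq_abs x
  nlinarith [sq_nonneg (x ^ 2 - 1), sq_nonneg x]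

lemma odd_int {k : ℕ} (hk : Odd k) : ∫ x : ℝ, x ^ k / (x ^ 4 + 1) ^ 2 = 0 := by
  have h := integral_neg_eq_self (fun x : ℝ => x ^ k / (x ^ 4 + 1) ^ 2) volume
  have h4 : ∀ a : ℝ, (-a) ^ 4 = a ^ 4 := fun a => by ring
  simp only [hk.neg_pow, h4, neg_div] at h
  rw [integral_neg] at h
  linarith


lemma sqrt2_sq : Real.sqrt 2 ^ 2 = 2 := Real.sq_sqrt (by norm_num)
lemma sqrt2_pos : 0 < Real.sqrt 2 := Real.sqrt_pos.mpr (by norm_num)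

lemma quadA_pos (x : ℝ) : 0 < x ^ 2 - Real.sqrt 2 * x + 1 := by
  nlinarith [sq_nonneg (2 * x - Real.sqrt 2), sqrt2_sq]

lemma quadB_pos (x : ℝ) : 0 < x ^ 2 + Real.sqrt 2 * x + 1 := by
  nlinarith [sq_nonneg (2 * x + Real.sqrt 2), sqrt2_sq]

-- derivative of F = (√2/2)(arctan(√2 x + 1) + arctan(√2 x - 1))
lemma hasDerivAt_F (x : ℝ) :
    HasDerivAt (fun x : ℝ => Real.sqrt 2 / 2 * (Real.arctan (Real.sqrt 2 * x + 1)
      + Real.arctan (Real.sqrt 2 * x - 1))) ((x ^ 2 + 1) / (x ^ 4 + 1)) x := by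
  have l1 : HasDerivAt (fun x : ℝ => Real.sqrt 2 * x + 1) (Real.sqrt 2) x := by
    simpa using ((hasDerivAt_id x).const_mul (Real.sqrt 2)).add_const 1
  have l2 : HasDerivAt (fun x : ℝ => Real.sqrt 2 * x - 1) (Real.sqrt 2) x := by
    simpa using ((hasDerivAt_id x).const_mul (Real.sqrt 2)).sub_const 1
  have h1 := (Real.hasDerivAt_arctan (Real.sqrt 2 * x + 1)).comp x l1
  have h2 := (Real.hasDerivAt_arctan (Real.sqrt 2 * x - 1)).comp x l2
  have h := (h1.add h2).const_mul (Real.sqrt 2 / 2)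
  refine h.congr_deriv ?_
  have hA : (1 + (Real.sqrt 2 * x + 1) ^ 2) = 2 * (x ^ 2 + Real.sqrt 2 * x + 1) := by
    linear_combination x ^ 2 * sqrt2_sq
  have hB : (1 + (Real.sqrt 2 * x - 1) ^ 2) = 2 * (x ^ 2 - Real.sqrt 2 * x + 1) := by
    linear_combination x ^ 2 * sqrt2_sq
  have hP := quadB_pos x
  have hQ := quadA_pos x
  have d3 : (0:ℝ) < x ^ 4 + 1 := by positivity
  rw [hA, hB]
  have hPQ : (x ^ 2 - Real.sqrt 2 * x + 1) * (x ^ 2 + Real.sqrt 2 * x + 1) = x ^ 4 + 1 := by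
    linear_combination (-(x ^ 2)) * sqrt2_sq
  rw [eq_div_iff d3.ne', ← hPQ]
  generalize gA : x ^ 2 - Real.sqrt 2 * x + 1 = A at *
  generalize gB : x ^ 2 + Real.sqrt 2 * x + 1 = B at *
  field_simp
  linear_combination (A + B) * sqrt2_sq - 2 * gA - 2 * gB

lemma intA : ∫ x : ℝ, (x ^ 2 + 1) / (x ^ 4 + 1) = Real.sqrt 2 * Real.pi := by
  have hint : Integrable fun x : ℝ => (x ^ 2 + 1) / (x ^ 4 + 1) := by
    have h := (int1 (k := 2) (by norm_num)).add (int1 (k := 0) (by norm_num))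
    apply h.congr
    filter_upwards with x
    have : (0:ℝ) < x ^ 4 + 1 := by positivity
    simp only [Pi.add_apply, Pi.sub_apply]
    field_simp
  have hb : Tendsto (fun x : ℝ => Real.sqrt 2 * x + 1) atBot atBot :=
    tendsto_atBot_add_const_right _ 1 (tendsto_id.const_mul_atBot sqrt2_pos)
  have ht : Tendsto (fun x : ℝ => Real.sqrt 2 * x + 1) atTop atTop :=
    tendsto_atTop_add_const_right _ 1 (tendsto_id.const_mul_atTop sqrt2_pos)
  have hb' : Tendsto (fun x : ℝ => Real.sqrt 2 * x - 1) atBot atBot :=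
    tendsto_atBot_add_const_right _ (-1) (tendsto_id.const_mul_atBot sqrt2_pos)
  have ht' : Tendsto (fun x : ℝ => Real.sqrt 2 * x - 1) atTop atTop :=
    tendsto_atTop_add_const_right _ (-1) (tendsto_id.const_mul_atTop sqrt2_pos)
  have arT := tendsto_nhds_of_tendsto_nhdsWithin Real.tendsto_arctan_atTop
  have arB := tendsto_nhds_of_tendsto_nhdsWithin Real.tendsto_arctan_atBot
  have htop : Tendsto (fun x : ℝ => Real.sqrt 2 / 2 * (Real.arctan (Real.sqrt 2 * x + 1)
      + Real.arctan (Real.sqrt 2 * x - 1))) atTop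
      (nhds (Real.sqrt 2 / 2 * (Real.pi / 2 + Real.pi / 2))) :=
    (((arT.comp ht).add (arT.comp ht')).const_mul _)
  have hbot : Tendsto (fun x : ℝ => Real.sqrt 2 / 2 * (Real.arctan (Real.sqrt 2 * x + 1)
      + Real.arctan (Real.sqrt 2 * x - 1))) atBot
      (nhds (Real.sqrt 2 / 2 * (-(Real.pi / 2) + -(Real.pi / 2)))) :=
    (((arB.comp hb).add (arB.comp hb')).const_mul _)
  have := integral_of_hasDerivAt_of_tendsto hasDerivAt_F hint hbot htop
  rw [this]; ring

lemma ratio_tendsto_one (a : ℝ) :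
    Tendsto (fun x : ℝ => (x ^ 2 - a * x + 1) / (x ^ 2 + a * x + 1)) atTop (nhds 1) := by
  have hP : (X ^ 2 - C a * X + 1 : ℝ[X]).degree = 2 := by compute_degree!
  have hQ : (X ^ 2 + C a * X + 1 : ℝ[X]).degree = 2 := by compute_degree!
  have h := Polynomial.div_tendsto_leadingCoeff_div_of_degree_eq (P := (X ^ 2 - C a * X + 1 : Polynomial ℝ)) (Q := (X ^ 2 + C a * X + 1 : Polynomial ℝ)) (hP.trans hQ.symm)
  have hPl : (X ^ 2 - C a * X + 1 : ℝ[X]).leadingCoeff = 1 := by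
    rw [Polynomial.leadingCoeff, Polynomial.natDegree_eq_of_degree_eq_some hP]
    simp [Polynomial.coeff_one]
  have hQl : (X ^ 2 + C a * X + 1 : ℝ[X]).leadingCoeff = 1 := by
    rw [Polynomial.leadingCoeff, Polynomial.natDegree_eq_of_degree_eq_some hQ]
    simp [Polynomial.coeff_one]
  rw [hPl, hQl] at h
  norm_num at h
  apply h.congr
  intro x
  simp

lemma sqrt2_cube : Real.sqrt 2 ^ 3 = 2 * Real.sqrt 2 := by
  rw [pow_succ, sqrt2_sq]

lemma hasDerivAt_K (x : ℝ) :
    HasDerivAt (fun x : ℝ => Real.sqrt 2 / 4 * (Real.log (x ^ 2 - Real.sqrt 2 * x + 1)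
      - Real.log (x ^ 2 + Real.sqrt 2 * x + 1))) ((x ^ 2 - 1) / (x ^ 4 + 1)) x := by
  have hq1 : HasDerivAt (fun x : ℝ => x ^ 2 - Real.sqrt 2 * x + 1) (2 * x - Real.sqrt 2) x := by
    simpa using ((hasDerivAt_pow 2 x).sub ((hasDerivAt_id x).const_mul (Real.sqrt 2))).add_const 1
  have hq2 : HasDerivAt (fun x : ℝ => x ^ 2 + Real.sqrt 2 * x + 1) (2 * x + Real.sqrt 2) x := by
    simpa using ((hasDerivAt_pow 2 x).add ((hasDerivAt_id x).const_mul (Real.sqrt 2))).add_const 1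
  have h1 := (Real.hasDerivAt_log (quadA_pos x).ne').comp x hq1
  have h2 := (Real.hasDerivAt_log (quadB_pos x).ne').comp x hq2
  have h := (h1.sub h2).const_mul (Real.sqrt 2 / 4)
  refine h.congr_deriv ?_
  have hP := quadA_pos x
  have hQ := quadB_pos x
  have d3 : (0:ℝ) < x ^ 4 + 1 := by positivity
  have hPQ : (x ^ 2 - Real.sqrt 2 * x + 1) * (x ^ 2 + Real.sqrt 2 * x + 1) = x ^ 4 + 1 := by
    linear_combination (-(x ^ 2)) * sqrt2_sq
  rw [eq_div_iff d3.ne', ← hPQ]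
  generalize gA : x ^ 2 - Real.sqrt 2 * x + 1 = A at *
  generalize gB : x ^ 2 + Real.sqrt 2 * x + 1 = B at *
  field_simp
  linear_combination (2 * Real.sqrt 2 * x + Real.sqrt 2 ^ 2) * gA
    + (Real.sqrt 2 ^ 2 - 2 * Real.sqrt 2 * x) * gB + (2 * x ^ 2 - 2) * sqrt2_sq

lemma log_tendsto_top :
    Tendsto (fun x : ℝ => Real.log (x ^ 2 - Real.sqrt 2 * x + 1)
      - Real.log (x ^ 2 + Real.sqrt 2 * x + 1)) atTop (nhds 0) := by
  have h := (Real.continuousAt_log one_ne_zero).tendsto.comp (ratio_tendsto_one (Real.sqrt 2))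
  rw [Real.log_one] at h
  apply h.congr
  intro x
  exact (Real.log_div (quadA_pos x).ne' (quadB_pos x).ne')

lemma log_tendsto_bot :
    Tendsto (fun x : ℝ => Real.log (x ^ 2 - Real.sqrt 2 * x + 1)
      - Real.log (x ^ 2 + Real.sqrt 2 * x + 1)) atBot (nhds 0) := by
  have hr : Tendsto (fun x : ℝ => (x ^ 2 - Real.sqrt 2 * x + 1) / (x ^ 2 + Real.sqrt 2 * x + 1))
      atBot (nhds 1) := by
    have h := (ratio_tendsto_one (-(Real.sqrt 2))).comp tendsto_neg_atBot_atTop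
    apply h.congr
    intro x
    show ((-x) ^ 2 - -Real.sqrt 2 * -x + 1) / ((-x) ^ 2 + -Real.sqrt 2 * -x + 1) = _
    ring_nf
  have h := (Real.continuousAt_log one_ne_zero).tendsto.comp hr
  rw [Real.log_one] at h
  apply h.congr
  intro x
  exact (Real.log_div (quadA_pos x).ne' (quadB_pos x).ne')

lemma intB : ∫ x : ℝ, (x ^ 2 - 1) / (x ^ 4 + 1) = 0 := by
  have hint : Integrable fun x : ℝ => (x ^ 2 - 1) / (x ^ 4 + 1) := by
    have h := (int1 (k := 2) (by norm_num)).sub (int1 (k := 0) (by norm_num))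
    apply h.congr
    filter_upwards with x
    have : (0:ℝ) < x ^ 4 + 1 := by positivity
    simp only [Pi.add_apply, Pi.sub_apply]
    field_simp
  have hbot := log_tendsto_bot.const_mul (Real.sqrt 2 / 4)
  have htop := log_tendsto_top.const_mul (Real.sqrt 2 / 4)
  rw [mul_zero] at hbot htop
  have := integral_of_hasDerivAt_of_tendsto hasDerivAt_K hint hbot htop
  rw [this]; ring

lemma intC : ∫ x : ℝ, (1 / (x ^ 4 + 1) - 4 * (x ^ 4 / (x ^ 4 + 1) ^ 2)) = 0 := by
  have hint : Integrable fun x : ℝ => (1 / (x ^ 4 + 1) - 4 * (x ^ 4 / (x ^ 4 + 1) ^ 2)) := by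
    have h := (int1 (k := 0) (by norm_num)).sub ((int2 (k := 4) (by norm_num)).const_mul 4)
    apply h.congr
    filter_upwards with x
    norm_num
  have hf : Integrable fun x : ℝ => x / (x ^ 4 + 1) := by
    have h := int1 (k := 1) (by norm_num)
    apply h.congr
    filter_upwards with x
    norm_num
  have hderiv : ∀ x : ℝ, HasDerivAt (fun x : ℝ => x / (x ^ 4 + 1))
      (1 / (x ^ 4 + 1) - 4 * (x ^ 4 / (x ^ 4 + 1) ^ 2)) x := by
    intro x
    have d : (0:ℝ) < x ^ 4 + 1 := by positivity
    have h := ((hasDerivAt_id x).div ((hasDerivAt_pow 4 x).add_const 1) d.ne')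
    refine h.congr_deriv ?_
    simp only [id]
    field_simp
    ring
  exact integral_eq_zero_of_hasDerivAt_of_integrable hderiv hint hf

lemma cube_tendsto_top : Tendsto (fun x : ℝ => x ^ 3 / (x ^ 4 + 1)) atTop (nhds 0) := by
  have hdeg : (X ^ 3 : ℝ[X]).degree < (X ^ 4 + 1 : ℝ[X]).degree := by
    rw [Polynomial.degree_X_pow]
    have : (X ^ 4 + 1 : ℝ[X]).degree = 4 := by compute_degree!
    rw [this]; norm_num
  have h := Polynomial.div_tendsto_zero_of_degree_lt (P := (X ^ 3 : Polynomial ℝ)) (Q := (X ^ 4 + 1 : Polynomial ℝ)) hdeg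
  apply h.congr
  intro x
  simp

lemma cube_tendsto_bot : Tendsto (fun x : ℝ => x ^ 3 / (x ^ 4 + 1)) atBot (nhds 0) := by
  have h := (cube_tendsto_top.comp tendsto_neg_atBot_atTop).neg
  rw [neg_zero] at h
  apply h.congr
  intro x
  show -((-x) ^ 3 / ((-x) ^ 4 + 1)) = _
  ring_nf

lemma intD : ∫ x : ℝ, (3 * (x ^ 2 / (x ^ 4 + 1)) - 4 * (x ^ 6 / (x ^ 4 + 1) ^ 2)) = 0 := by
  have hint : Integrable fun x : ℝ => (3 * (x ^ 2 / (x ^ 4 + 1)) - 4 * (x ^ 6 / (x ^ 4 + 1) ^ 2)) :=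
    ((int1 (k := 2) (by norm_num)).const_mul 3).sub ((int2 (k := 6) (by norm_num)).const_mul 4)
  have hderiv : ∀ x : ℝ, HasDerivAt (fun x : ℝ => x ^ 3 / (x ^ 4 + 1))
      (3 * (x ^ 2 / (x ^ 4 + 1)) - 4 * (x ^ 6 / (x ^ 4 + 1) ^ 2)) x := by
    intro x
    have d : (0:ℝ) < x ^ 4 + 1 := by positivity
    have h := ((hasDerivAt_pow 3 x).div ((hasDerivAt_pow 4 x).add_const 1) d.ne')
    refine h.congr_deriv ?_
    field_simp
    ring
  have := integral_of_hasDerivAt_of_tendsto hderiv hint cube_tendsto_bot cube_tendsto_top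
  rw [this]; ring

lemma int1_0 : Integrable fun x : ℝ => 1 / (x ^ 4 + 1) := by
  simpa using int1 (k := 0) (by norm_num)

lemma int2_0 : Integrable fun x : ℝ => 1 / (x ^ 4 + 1) ^ 2 := by
  simpa using int2 (k := 0) (by norm_num)

lemma J2_val : (∫ x : ℝ, x ^ 2 / (x ^ 4 + 1)) = Real.sqrt 2 * Real.pi / 2 ∧
    (∫ x : ℝ, 1 / (x ^ 4 + 1)) = Real.sqrt 2 * Real.pi / 2 := by
  have h1 : (∫ x : ℝ, x ^ 2 / (x ^ 4 + 1)) + (∫ x : ℝ, 1 / (x ^ 4 + 1)) = Real.sqrt 2 * Real.pi := by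
    rw [← integral_add (int1 (k := 2) (by norm_num)) int1_0, ← intA]
    apply integral_congr_ae
    filter_upwards with x
    rw [← add_div]
  have h2 : (∫ x : ℝ, x ^ 2 / (x ^ 4 + 1)) - (∫ x : ℝ, 1 / (x ^ 4 + 1)) = 0 := by
    rw [← integral_sub (int1 (k := 2) (by norm_num)) int1_0, ← intB]
    apply integral_congr_ae
    filter_upwards with x
    rw [div_sub_div_same]
  constructor <;> linarith

lemma M4_val : (∫ x : ℝ, x ^ 4 / (x ^ 4 + 1) ^ 2) = Real.sqrt 2 * Real.pi / 8 := by
  have h := intC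
  rw [integral_sub int1_0 ((int2 (k := 4) (by norm_num)).const_mul 4),
    integral_const_mul, J2_val.2] at h
  linarith

lemma M6_val : (∫ x : ℝ, x ^ 6 / (x ^ 4 + 1) ^ 2) = 3 * (Real.sqrt 2 * Real.pi) / 8 := by
  have h := intD
  rw [integral_sub ((int1 (k := 2) (by norm_num)).const_mul 3)
    ((int2 (k := 6) (by norm_num)).const_mul 4),
    integral_const_mul, integral_const_mul, J2_val.1] at h
  linarith

lemma M0_val : (∫ x : ℝ, 1 / (x ^ 4 + 1) ^ 2) = 3 * (Real.sqrt 2 * Real.pi) / 8 := by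
  have e : (∫ x : ℝ, 1 / (x ^ 4 + 1) ^ 2)
      = ∫ x : ℝ, (1 / (x ^ 4 + 1) - x ^ 4 / (x ^ 4 + 1) ^ 2) := by
    apply integral_congr_ae
    filter_upwards with x
    have d : (0:ℝ) < x ^ 4 + 1 := by positivity
    field_simp
    ring
  rw [e, integral_sub int1_0 (int2 (k := 4) (by norm_num)), J2_val.2, M4_val]
  ring

lemma M2_val : (∫ x : ℝ, x ^ 2 / (x ^ 4 + 1) ^ 2) = Real.sqrt 2 * Real.pi / 8 := by
  have e : (∫ x : ℝ, x ^ 2 / (x ^ 4 + 1) ^ 2)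
      = ∫ x : ℝ, (x ^ 2 / (x ^ 4 + 1) - x ^ 6 / (x ^ 4 + 1) ^ 2) := by
    apply integral_congr_ae
    filter_upwards with x
    have d : (0:ℝ) < x ^ 4 + 1 := by positivity
    field_simp
    ring
  rw [e, integral_sub (int1 (k := 2) (by norm_num)) (int2 (k := 6) (by norm_num)),
    J2_val.1, M6_val]
  ring

noncomputable def hh (k : ℕ) (x : ℝ) : ℝ := x ^ k / (x ^ 4 + 1) ^ 2

lemma key_im {x y : ℝ} (hxy : x ≠ y) :
    ((imG (-x ^ 2) - imG (-y ^ 2)) / (x - y)) ^ 2 =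
      hh 6 x * hh 0 y + 3 * (hh 4 x * hh 2 y) + 3 * (hh 2 x * hh 4 y) + hh 0 x * hh 6 y
      + 2 * (hh 5 x * hh 1 y) + 2 * (hh 1 x * hh 5 y) + 4 * (hh 3 x * hh 3 y) := by
  have dx : (0:ℝ) < x ^ 4 + 1 := by positivity
  have dy : (0:ℝ) < y ^ 4 + 1 := by positivity
  have hxy' : x - y ≠ 0 := sub_ne_zero.mpr hxy
  simp only [imG, hh]
  have e1 : (-x ^ 2) ^ 2 + 1 = x ^ 4 + 1 := by ring
  have e2 : (-y ^ 2) ^ 2 + 1 = y ^ 4 + 1 := by ring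
  rw [e1, e2]
  field_simp
  ring

lemma key_im' {x y : ℝ} (hxy : x ≠ y) :
    ((imG (x ^ 2) - imG (y ^ 2)) / (x - y)) ^ 2 =
      hh 6 x * hh 0 y + 3 * (hh 4 x * hh 2 y) + 3 * (hh 2 x * hh 4 y) + hh 0 x * hh 6 y
      + 2 * (hh 5 x * hh 1 y) + 2 * (hh 1 x * hh 5 y) + 4 * (hh 3 x * hh 3 y) := by
  have dx : (0:ℝ) < x ^ 4 + 1 := by positivity
  have dy : (0:ℝ) < y ^ 4 + 1 := by positivity
  have hxy' : x - y ≠ 0 := sub_ne_zero.mpr hxy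
  simp only [imG, hh]
  have e1 : (x ^ 2) ^ 2 + 1 = x ^ 4 + 1 := by ring
  have e2 : (y ^ 2) ^ 2 + 1 = y ^ 4 + 1 := by ring
  rw [e1, e2]
  field_simp
  ring

lemma key_re {x y : ℝ} (hxy : x ≠ y) :
    ((reG (-x ^ 2) - reG (-y ^ 2)) / (x - y)) ^ 2 =
      hh 2 x * hh 0 y + hh 0 x * hh 2 y - 2 * (hh 4 x * hh 2 y) - 2 * (hh 2 x * hh 4 y)
      + hh 6 x * hh 4 y + hh 4 x * hh 6 y
      + 2 * (hh 1 x * hh 1 y) - 4 * (hh 3 x * hh 3 y) + 2 * (hh 5 x * hh 5 y) := by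
  have dx : (0:ℝ) < x ^ 4 + 1 := by positivity
  have dy : (0:ℝ) < y ^ 4 + 1 := by positivity
  have hxy' : x - y ≠ 0 := sub_ne_zero.mpr hxy
  simp only [reG, hh]
  have e1 : (-x ^ 2) ^ 2 + 1 = x ^ 4 + 1 := by ring
  have e2 : (-y ^ 2) ^ 2 + 1 = y ^ 4 + 1 := by ring
  rw [e1, e2]
  field_simp
  ring

lemma key_re' {x y : ℝ} (hxy : x ≠ y) :
    ((reG (x ^ 2) - reG (y ^ 2)) / (x - y)) ^ 2 =
      hh 2 x * hh 0 y + hh 0 x * hh 2 y - 2 * (hh 4 x * hh 2 y) - 2 * (hh 2 x * hh 4 y)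
      + hh 6 x * hh 4 y + hh 4 x * hh 6 y
      + 2 * (hh 1 x * hh 1 y) - 4 * (hh 3 x * hh 3 y) + 2 * (hh 5 x * hh 5 y) := by
  have dx : (0:ℝ) < x ^ 4 + 1 := by positivity
  have dy : (0:ℝ) < y ^ 4 + 1 := by positivity
  have hxy' : x - y ≠ 0 := sub_ne_zero.mpr hxy
  simp only [reG, hh]
  have e1 : (x ^ 2) ^ 2 + 1 = x ^ 4 + 1 := by ring
  have e2 : (y ^ 2) ^ 2 + 1 = y ^ 4 + 1 := by ring
  rw [e1, e2]
  field_simp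
  ring

lemma hdiag : (volume : Measure (ℝ × ℝ)) {p : ℝ × ℝ | p.1 = p.2} = 0 := by
  have hmeas : MeasurableSet {p : ℝ × ℝ | p.1 = p.2} :=
    measurableSet_eq_fun measurable_fst measurable_snd
  rw [Measure.volume_eq_prod, Measure.measure_prod_null hmeas]
  refine Filter.Eventually.of_forall fun x => ?_
  have : (Prod.mk x ⁻¹' {p : ℝ × ℝ | p.1 = p.2}) = {x} := by
    ext y; simp [eq_comm]
  simp [this]

lemma ae_offdiag : ∀ᵐ p : ℝ × ℝ, p.1 ≠ p.2 := by
  rw [MeasureTheory.ae_iff]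
  have : {p : ℝ × ℝ | ¬ p.1 ≠ p.2} = {p : ℝ × ℝ | p.1 = p.2} := by
    ext p; simp
  rw [this]
  exact hdiag

lemma int_hh {k : ℕ} (hk : k ≤ 6) : Integrable (hh k) := by
  unfold hh; exact int2 hk

lemma intp {a b : ℕ} (ha : a ≤ 6) (hb : b ≤ 6) :
    Integrable (fun p : ℝ × ℝ => hh a p.1 * hh b p.2) := by
  rw [Measure.volume_eq_prod]
  exact (int_hh ha).mul_prod (int_hh hb)

lemma ip (a b : ℕ) :
    (∫ p : ℝ × ℝ, hh a p.1 * hh b p.2) = (∫ x : ℝ, hh a x) * (∫ y : ℝ, hh b y) := by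
  rw [Measure.volume_eq_prod, integral_prod_mul]

lemma V0 : (∫ x : ℝ, hh 0 x) = 3 * (Real.sqrt 2 * Real.pi) / 8 := by
  rw [show hh 0 = fun x : ℝ => 1 / (x ^ 4 + 1) ^ 2 from funext fun x => by simp [hh]]
  exact M0_val

lemma V2 : (∫ x : ℝ, hh 2 x) = Real.sqrt 2 * Real.pi / 8 := M2_val

lemma V4 : (∫ x : ℝ, hh 4 x) = Real.sqrt 2 * Real.pi / 8 := M4_val

lemma V6 : (∫ x : ℝ, hh 6 x) = 3 * (Real.sqrt 2 * Real.pi) / 8 := M6_val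

lemma O1 : (∫ x : ℝ, hh 1 x) = 0 := odd_int ⟨0, rfl⟩
lemma O3 : (∫ x : ℝ, hh 3 x) = 0 := odd_int ⟨1, rfl⟩
lemma O5 : (∫ x : ℝ, hh 5 x) = 0 := odd_int ⟨2, rfl⟩

lemma im2d :
    (∫ p : ℝ × ℝ, (hh 6 p.1 * hh 0 p.2 + 3 * (hh 4 p.1 * hh 2 p.2) + 3 * (hh 2 p.1 * hh 4 p.2)
      + hh 0 p.1 * hh 6 p.2 + 2 * (hh 5 p.1 * hh 1 p.2) + 2 * (hh 1 p.1 * hh 5 p.2)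
      + 4 * (hh 3 p.1 * hh 3 p.2))) = 3 * Real.pi ^ 2 / 4 := by
  have J1 : Integrable (fun p : ℝ × ℝ => hh 6 p.1 * hh 0 p.2) volume := intp (by norm_num : (6:ℕ) ≤ 6) (by norm_num : (0:ℕ) ≤ 6)
  have J2 : Integrable (fun p : ℝ × ℝ => 3 * (hh 4 p.1 * hh 2 p.2)) volume := (intp (by norm_num : (4:ℕ) ≤ 6) (by norm_num : (2:ℕ) ≤ 6)).const_mul (3:ℝ)
  have J3 : Integrable (fun p : ℝ × ℝ => 3 * (hh 2 p.1 * hh 4 p.2)) volume := (intp (by norm_num : (2:ℕ) ≤ 6) (by norm_num : (4:ℕ) ≤ 6)).const_mul (3:ℝ)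
  have J4 : Integrable (fun p : ℝ × ℝ => hh 0 p.1 * hh 6 p.2) volume := intp (by norm_num : (0:ℕ) ≤ 6) (by norm_num : (6:ℕ) ≤ 6)
  have J5 : Integrable (fun p : ℝ × ℝ => 2 * (hh 5 p.1 * hh 1 p.2)) volume := (intp (by norm_num : (5:ℕ) ≤ 6) (by norm_num : (1:ℕ) ≤ 6)).const_mul (2:ℝ)
  have J6 : Integrable (fun p : ℝ × ℝ => 2 * (hh 1 p.1 * hh 5 p.2)) volume := (intp (by norm_num : (1:ℕ) ≤ 6) (by norm_num : (5:ℕ) ≤ 6)).const_mul (2:ℝ)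
  have J7 : Integrable (fun p : ℝ × ℝ => 4 * (hh 3 p.1 * hh 3 p.2)) volume := (intp (by norm_num : (3:ℕ) ≤ 6) (by norm_num : (3:ℕ) ≤ 6)).const_mul (4:ℝ)
  have S2 : Integrable (fun p : ℝ × ℝ => hh 6 p.1 * hh 0 p.2 + 3 * (hh 4 p.1 * hh 2 p.2)) volume := J1.add J2
  have S3 : Integrable (fun p : ℝ × ℝ => hh 6 p.1 * hh 0 p.2 + 3 * (hh 4 p.1 * hh 2 p.2) + 3 * (hh 2 p.1 * hh 4 p.2)) volume := S2.add J3
  have S4 : Integrable (fun p : ℝ × ℝ => hh 6 p.1 * hh 0 p.2 + 3 * (hh 4 p.1 * hh 2 p.2) + 3 * (hh 2 p.1 * hh 4 p.2) + hh 0 p.1 * hh 6 p.2) volume := S3.add J4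
  have S5 : Integrable (fun p : ℝ × ℝ => hh 6 p.1 * hh 0 p.2 + 3 * (hh 4 p.1 * hh 2 p.2) + 3 * (hh 2 p.1 * hh 4 p.2) + hh 0 p.1 * hh 6 p.2 + 2 * (hh 5 p.1 * hh 1 p.2)) volume := S4.add J5
  have S6 : Integrable (fun p : ℝ × ℝ => hh 6 p.1 * hh 0 p.2 + 3 * (hh 4 p.1 * hh 2 p.2) + 3 * (hh 2 p.1 * hh 4 p.2) + hh 0 p.1 * hh 6 p.2 + 2 * (hh 5 p.1 * hh 1 p.2) + 2 * (hh 1 p.1 * hh 5 p.2)) volume := S5.add J6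
  have S7 : Integrable (fun p : ℝ × ℝ => hh 6 p.1 * hh 0 p.2 + 3 * (hh 4 p.1 * hh 2 p.2) + 3 * (hh 2 p.1 * hh 4 p.2) + hh 0 p.1 * hh 6 p.2 + 2 * (hh 5 p.1 * hh 1 p.2) + 2 * (hh 1 p.1 * hh 5 p.2) + 4 * (hh 3 p.1 * hh 3 p.2)) volume := S6.add J7
  have E : (∫ p : ℝ × ℝ, (hh 6 p.1 * hh 0 p.2 + 3 * (hh 4 p.1 * hh 2 p.2) + 3 * (hh 2 p.1 * hh 4 p.2) + hh 0 p.1 * hh 6 p.2 + 2 * (hh 5 p.1 * hh 1 p.2) + 2 * (hh 1 p.1 * hh 5 p.2) + 4 * (hh 3 p.1 * hh 3 p.2))) = (∫ p : ℝ × ℝ, hh 6 p.1 * hh 0 p.2) + (∫ p : ℝ × ℝ, 3 * (hh 4 p.1 * hh 2 p.2)) + (∫ p : ℝ × ℝ, 3 * (hh 2 p.1 * hh 4 p.2)) + (∫ p : ℝ × ℝ, hh 0 p.1 * hh 6 p.2) + (∫ p : ℝ × ℝ, 2 * (hh 5 p.1 * hh 1 p.2)) + (∫ p : ℝ × ℝ,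 2 * (hh 1 p.1 * hh 5 p.2)) + (∫ p : ℝ × ℝ, 4 * (hh 3 p.1 * hh 3 p.2)) := by
    rw [integral_add S6 J7, integral_add S5 J6, integral_add S4 J5, integral_add S3 J4, integral_add S2 J3, integral_add J1 J2]
  rw [E, integral_const_mul, integral_const_mul, integral_const_mul, integral_const_mul,
    integral_const_mul, ip, ip, ip, ip, ip, ip, ip, V0, V2, V4, V6, O1, O3, O5]
  linear_combination (3 / 8 * Real.pi ^ 2) * sqrt2_sq

lemma re2d :
    (∫ p : ℝ × ℝ, (hh 2 p.1 * hh 0 p.2 + hh 0 p.1 * hh 2 p.2 - 2 * (hh 4 p.1 * hh 2 p.2)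
      - 2 * (hh 2 p.1 * hh 4 p.2) + hh 6 p.1 * hh 4 p.2 + hh 4 p.1 * hh 6 p.2
      + 2 * (hh 1 p.1 * hh 1 p.2) - 4 * (hh 3 p.1 * hh 3 p.2) + 2 * (hh 5 p.1 * hh 5 p.2)))
      = Real.pi ^ 2 / 4 := by
  have J1 : Integrable (fun p : ℝ × ℝ => hh 2 p.1 * hh 0 p.2) volume := intp (by norm_num : (2:ℕ) ≤ 6) (by norm_num : (0:ℕ) ≤ 6)
  have J2 : Integrable (fun p : ℝ × ℝ => hh 0 p.1 * hh 2 p.2) volume := intp (by norm_num : (0:ℕ) ≤ 6) (by norm_num : (2:ℕ) ≤ 6)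
  have J3 : Integrable (fun p : ℝ × ℝ => 2 * (hh 4 p.1 * hh 2 p.2)) volume := (intp (by norm_num : (4:ℕ) ≤ 6) (by norm_num : (2:ℕ) ≤ 6)).const_mul (2:ℝ)
  have J4 : Integrable (fun p : ℝ × ℝ => 2 * (hh 2 p.1 * hh 4 p.2)) volume := (intp (by norm_num : (2:ℕ) ≤ 6) (by norm_num : (4:ℕ) ≤ 6)).const_mul (2:ℝ)
  have J5 : Integrable (fun p : ℝ × ℝ => hh 6 p.1 * hh 4 p.2) volume := intp (by norm_num : (6:ℕ) ≤ 6) (by norm_num : (4:ℕ) ≤ 6)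
  have J6 : Integrable (fun p : ℝ × ℝ => hh 4 p.1 * hh 6 p.2) volume := intp (by norm_num : (4:ℕ) ≤ 6) (by norm_num : (6:ℕ) ≤ 6)
  have J7 : Integrable (fun p : ℝ × ℝ => 2 * (hh 1 p.1 * hh 1 p.2)) volume := (intp (by norm_num : (1:ℕ) ≤ 6) (by norm_num : (1:ℕ) ≤ 6)).const_mul (2:ℝ)
  have J8 : Integrable (fun p : ℝ × ℝ => 4 * (hh 3 p.1 * hh 3 p.2)) volume := (intp (by norm_num : (3:ℕ) ≤ 6) (by norm_num : (3:ℕ) ≤ 6)).const_mul (4:ℝ)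
  have J9 : Integrable (fun p : ℝ × ℝ => 2 * (hh 5 p.1 * hh 5 p.2)) volume := (intp (by norm_num : (5:ℕ) ≤ 6) (by norm_num : (5:ℕ) ≤ 6)).const_mul (2:ℝ)
  have S2 : Integrable (fun p : ℝ × ℝ => hh 2 p.1 * hh 0 p.2 + hh 0 p.1 * hh 2 p.2) volume := J1.add J2
  have S3 : Integrable (fun p : ℝ × ℝ => hh 2 p.1 * hh 0 p.2 + hh 0 p.1 * hh 2 p.2 - 2 * (hh 4 p.1 * hh 2 p.2)) volume := S2.sub J3
  have S4 : Integrable (fun p : ℝ × ℝ => hh 2 p.1 * hh 0 p.2 + hh 0 p.1 * hh 2 p.2 - 2 * (hh 4 p.1 * hh 2 p.2) - 2 * (hh 2 p.1 * hh 4 p.2)) volume := S3.sub J4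
  have S5 : Integrable (fun p : ℝ × ℝ => hh 2 p.1 * hh 0 p.2 + hh 0 p.1 * hh 2 p.2 - 2 * (hh 4 p.1 * hh 2 p.2) - 2 * (hh 2 p.1 * hh 4 p.2) + hh 6 p.1 * hh 4 p.2) volume := S4.add J5
  have S6 : Integrable (fun p : ℝ × ℝ => hh 2 p.1 * hh 0 p.2 + hh 0 p.1 * hh 2 p.2 - 2 * (hh 4 p.1 * hh 2 p.2) - 2 * (hh 2 p.1 * hh 4 p.2) + hh 6 p.1 * hh 4 p.2 + hh 4 p.1 * hh 6 p.2) volume := S5.add J6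
  have S7 : Integrable (fun p : ℝ × ℝ => hh 2 p.1 * hh 0 p.2 + hh 0 p.1 * hh 2 p.2 - 2 * (hh 4 p.1 * hh 2 p.2) - 2 * (hh 2 p.1 * hh 4 p.2) + hh 6 p.1 * hh 4 p.2 + hh 4 p.1 * hh 6 p.2 + 2 * (hh 1 p.1 * hh 1 p.2)) volume := S6.add J7
  have S8 : Integrable (fun p : ℝ × ℝ => hh 2 p.1 * hh 0 p.2 + hh 0 p.1 * hh 2 p.2 - 2 * (hh 4 p.1 * hh 2 p.2) - 2 * (hh 2 p.1 * hh 4 p.2) + hh 6 p.1 * hh 4 p.2 + hh 4 p.1 * hh 6 p.2 + 2 * (hh 1 p.1 * hh 1 p.2) - 4 * (hh 3 p.1 * hh 3 p.2)) volume := S7.sub J8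
  have S9 : Integrable (fun p : ℝ × ℝ => hh 2 p.1 * hh 0 p.2 + hh 0 p.1 * hh 2 p.2 - 2 * (hh 4 p.1 * hh 2 p.2) - 2 * (hh 2 p.1 * hh 4 p.2) + hh 6 p.1 * hh 4 p.2 + hh 4 p.1 * hh 6 p.2 + 2 * (hh 1 p.1 * hh 1 p.2) - 4 * (hh 3 p.1 * hh 3 p.2) + 2 * (hh 5 p.1 * hh 5 p.2)) volume := S8.add J9
  have E : (∫ p : ℝ × ℝ, (hh 2 p.1 * hh 0 p.2 + hh 0 p.1 * hh 2 p.2 - 2 * (hh 4 p.1 * hh 2 p.2) - 2 * (hh 2 p.1 * hh 4 p.2) + hh 6 p.1 * hh 4 p.2 + hh 4 p.1 * hh 6 p.2 + 2 * (hh 1 p.1 * hh 1 p.2) - 4 * (hh 3 p.1 * hh 3 p.2) + 2 * (hh 5 p.1 * hh 5 p.2))) = (∫ p : ℝ × ℝ, hh 2 p.1 * hh 0 p.2) + (∫ p : ℝ × ℝ, hh 0 p.1 * hh 2 p.2) - (∫ p : ℝ × ℝ, 2 * (hh 4 p.1 * hh 2 p.2)) - (∫ p : ℝ × ℝ, 2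 * (hh 2 p.1 * hh 4 p.2)) + (∫ p : ℝ × ℝ, hh 6 p.1 * hh 4 p.2) + (∫ p : ℝ × ℝ, hh 4 p.1 * hh 6 p.2) + (∫ p : ℝ × ℝ, 2 * (hh 1 p.1 * hh 1 p.2)) - (∫ p : ℝ × ℝ, 4 * (hh 3 p.1 * hh 3 p.2)) + (∫ p : ℝ × ℝ, 2 * (hh 5 p.1 * hh 5 p.2)) := by
    rw [integral_add S8 J9, integral_sub S7 J8, integral_add S6 J7, integral_add S5 J6, integral_add S4 J5, integral_sub S3 J4, integral_sub S2 J3, integral_add J1 J2]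
  rw [E, integral_const_mul, integral_const_mul, integral_const_mul, integral_const_mul,
    integral_const_mul, ip, ip, ip, ip, ip, ip, ip, ip, ip, V0, V2, V4, V6, O1, O3, O5]
  linear_combination (1 / 8 * Real.pi ^ 2) * sqrt2_sq

theorem stmt18 :
    (1 / (8 * Real.pi ^ 2)) *
        (∫ q : ℝ × ℝ, ((imG (-q.1 ^ 2) - imG (-q.2 ^ 2)) / (q.1 - q.2)) ^ 2) = 3 / 32 ∧
    (1 / (8 * Real.pi ^ 2)) *
        (∫ q : ℝ × ℝ, ((reG (-q.1 ^ 2) - reG (-q.2 ^ 2)) / (q.1 - q.2)) ^ 2) = 1 / 32 ∧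
    (1 / (8 * Real.pi ^ 2)) *
        (∫ q : ℝ × ℝ, ((imG (q.1 ^ 2) - imG (q.2 ^ 2)) / (q.1 - q.2)) ^ 2) = 3 / 32 ∧
    (1 / (8 * Real.pi ^ 2)) *
        (∫ q : ℝ × ℝ, ((reG (q.1 ^ 2) - reG (q.2 ^ 2)) / (q.1 - q.2)) ^ 2) = 1 / 32 := by
  have hpi := Real.pi_ne_zero
  refine ⟨?_, ?_, ?_, ?_⟩
  · have e : (∫ q : ℝ × ℝ, ((imG (-q.1 ^ 2) - imG (-q.2 ^ 2)) / (q.1 - q.2)) ^ 2)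
        = 3 * Real.pi ^ 2 / 4 := by
      rw [← im2d]
      apply integral_congr_ae
      filter_upwards [ae_offdiag] with p hp
      exact key_im hp
    rw [e]; field_simp; ring
  · have e : (∫ q : ℝ × ℝ, ((reG (-q.1 ^ 2) - reG (-q.2 ^ 2)) / (q.1 - q.2)) ^ 2)
        = Real.pi ^ 2 / 4 := by
      rw [← re2d]
      apply integral_congr_ae
      filter_upwards [ae_offdiag] with p hp
      exact key_re hp
    rw [e]; field_simp; ring
  · have e : (∫ q : ℝ × ℝ, ((imG (q.1 ^ 2) - imG (q.2 ^ 2)) / (q.1 - q.2)) ^ 2)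
        = 3 * Real.pi ^ 2 / 4 := by
      rw [← im2d]
      apply integral_congr_ae
      filter_upwards [ae_offdiag] with p hp
      exact key_im' hp
    rw [e]; field_simp; ring
  · have e : (∫ q : ℝ × ℝ, ((reG (q.1 ^ 2) - reG (q.2 ^ 2)) / (q.1 - q.2)) ^ 2)
        = Real.pi ^ 2 / 4 := by
      rw [← re2d]
      apply integral_congr_ae
      filter_upwards [ae_offdiag] with p hp
      exact key_re' hp
    rw [e]; field_simp; ring
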